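/- Let F be a field of characteristic 2, V a finite additive subgroup of F, and β ∈ F \ V. Let W = V ∪ (V + β) (the subgroup generated by V and β). Then s_W(x) = s_V(x)² + s_V(β)·s_V(x), where s_U(x) = ∏_{c∈U}(x−c). -/

import Mathlib

open Polynomial

/-- Let `F` be a field of characteristic 2, `V` a finite additive subgroup of `F`,
and `β ∈ F \ V`.  Let `W = V ∪ (V + β)` (the subgroup generated by `V` and `β`).
Then `s_W(x) = s_V(x)² + s_V(β)·s_V(x)`, where `s_U(x) = ∏_{c ∈ U} (x − c)`. -/
theorem stmt_4 (F : Type*) [Field F] [CharP F 2] [DecidableEq F]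
    (V : AddSubgroup F) [Fintype V] (β : F) (hβ : β ∉ V)
    (W : Finset F)
    (hW : W = Finset.univ.image (fun c : V => (c : F))
            ∪ Finset.univ.image (fun c : V => (c : F) + β))
    (sV sW : F → F)
    (hsV : ∀ x, sV x = ∏ c : V, (x - (c : F)))
    (hsW : ∀ x, sW x = ∏ c ∈ W, (x - c)) :
    ∀ x, sW x = sV x ^ 2 + sV β * sV x := by
  intro x
  set q := Fintype.card V with hq
  have hq1 : 1 ≤ q := Fintype.card_pos
  set P : F[X] := ∏ c : V, (X - C (c : F)) with hP
  set Q : F[X] := ∏ c : V, (X - C ((c : F) + β)) with hQ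
  have hPeval : ∀ y : F, P.eval y = sV y := by
    intro y; rw [hsV]; simp [hP, eval_prod]
  have hQeval : ∀ y : F, Q.eval y = ∏ c : V, (y - ((c : F) + β)) := by
    intro y; simp [hQ, eval_prod]
  -- translation invariance of sV on cosets
  have key : ∀ c : V, (∏ d : V, ((c : F) + β - (d : F))) = sV β := by
    intro c
    rw [hsV]
    apply Fintype.prod_equiv (Equiv.subRight c)
    intro d
    simp only [Equiv.subRight_apply, AddSubgroupClass.coe_sub]
    ring
  -- P and Q are monic of degree q
  have hPmonic : P.Monic := monic_prod_of_monic _ _ (fun c _ => monic_X_sub_C _)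
  have hQmonic : Q.Monic := monic_prod_of_monic _ _ (fun c _ => monic_X_sub_C _)
  have hPdeg : P.natDegree = q := by
    rw [hP, natDegree_prod _ _ (fun c _ => X_sub_C_ne_zero _)]
    simp only [natDegree_X_sub_C]
    simp [hq]
  have hQdeg : Q.natDegree = q := by
    rw [hQ, natDegree_prod _ _ (fun c _ => X_sub_C_ne_zero _)]
    simp only [natDegree_X_sub_C]
    simp [hq]
  -- the remainder polynomial
  set R : F[X] := Q + P + C (sV β) with hR
  have hRzero : R = 0 := by
    rcases eq_or_ne R 0 with h0 | h0
    · exact h0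
    apply Polynomial.eq_zero_of_natDegree_lt_card_of_eval_eq_zero R
      (f := fun c : V => (c : F) + β)
    · intro a b hab
      exact Subtype.ext (add_right_cancel hab)
    · intro c
      have h1 : Q.eval ((c : F) + β) = 0 := by
        rw [hQeval]
        apply Finset.prod_eq_zero (Finset.mem_univ c)
        ring
      have h2 : P.eval ((c : F) + β) = ∏ d : V, ((c : F) + β - (d : F)) := by
        simp [hP, eval_prod]
      rw [hR]
      simp only [eval_add, eval_C, h1, h2, key c, zero_add]
      exact CharTwo.add_self_eq_zero _
    · -- degree bound
      have hQP : (Q + P).degree < (q : ℕ∞) := by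
        have : Q + P = Q - P := by rw [CharTwo.sub_eq_add]
        rw [this]
        have hd : Q.degree = P.degree := by
          rw [degree_eq_natDegree hPmonic.ne_zero, degree_eq_natDegree hQmonic.ne_zero,
            hPdeg, hQdeg]
        calc (Q - P).degree < Q.degree := by
              apply degree_sub_lt hd hQmonic.ne_zero
              rw [hPmonic.leadingCoeff, hQmonic.leadingCoeff]
          _ = (show WithBot ℕ from (q : ℕ∞)) := by rw [degree_eq_natDegree hQmonic.ne_zero, hQdeg]; rfl
      have hC : (C (sV β)).degree < (q : ℕ∞) := by
        apply lt_of_le_of_lt (degree_C_le)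
        exact (WithBot.coe_lt_coe.mpr hq1 : ((0:ℕ) : WithBot ℕ) < (q : WithBot ℕ))
      have hRd : R.degree < (q : ℕ∞) := lt_of_le_of_lt (degree_add_le _ _) (max_lt hQP hC)
      have := (natDegree_lt_iff_degree_lt h0).mpr hRd
      simpa [hq] using this
  -- hence Q = P + C (sV β)
  have hQP : Q = P + C (sV β) := by
    have h : Q - (P + C (sV β)) = 0 := by
      rw [CharTwo.sub_eq_add, ← add_assoc, ← hR, hRzero]
    exact sub_eq_zero.mp h
  -- disjointness of the two cosets
  have hdisj : Disjoint (Finset.univ.image (fun c : V => (c : F)))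
      (Finset.univ.image (fun c : V => (c : F) + β)) := by
    rw [Finset.disjoint_left]
    rintro a ha hb
    simp only [Finset.mem_image, Finset.mem_univ, true_and] at ha hb
    obtain ⟨c, rfl⟩ := ha
    obtain ⟨d, hd⟩ := hb
    apply hβ
    have : β = (c : F) - (d : F) := by linear_combination hd
    rw [this]
    exact V.sub_mem c.2 d.2
  -- split the product
  have hprod : sW x = P.eval x * Q.eval x := by
    rw [hsW, hW, Finset.prod_union hdisj]
    congr 1
    · rw [Finset.prod_image (fun a _ b _ h => Subtype.ext h)]
      simp [hP, eval_prod]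
    · rw [Finset.prod_image (fun a _ b _ h => Subtype.ext (add_right_cancel h))]
      simp [hQ, eval_prod]
  rw [hprod, hQP]
  simp only [eval_add, eval_C, hPeval]
  ring
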